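/- arXiv:2204.14196 — 2 statements merged into one kernel-verified Lean document; each statement's English description precedes it below -/
import Mathlib

section
/- Let d be a nonzero integer with gcd(d,6) = 1 and let ω ∈ {−1, 1}. Then every triple (a,b,c) ∈ ℤ³ with b² − 4ac = d², 6 | a, and b ≡ ω|d| (mod 12) is Γ₀(6)-equivalent to exactly one form (0, ω|d|, c₀) with 0 ≤ c₀ < |d|. In particular, the |d| forms (0, ω|d|, c₀) for 0 ≤ c₀ < |d| are pairwise Γ₀(6)-inequivalent. -/
/-- The action of `γ = [[A,B],[C,D]] ∈ SL₂(ℤ)` on an integral binary quadratic form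
`(a,b,c)`, given by `(γQ)(x,y) = Q(Dx - By, -Cx + Ay)`. -/
def actQF (γ : Matrix.SpecialLinearGroup (Fin 2) ℤ) (Q : ℤ × ℤ × ℤ) : ℤ × ℤ × ℤ :=
  let A := γ.1 0 0; let B := γ.1 0 1; let C := γ.1 1 0; let D := γ.1 1 1
  let a := Q.1; let b := Q.2.1; let c := Q.2.2
  (a * D ^ 2 - b * C * D + c * C ^ 2,
   -2 * a * B * D + b * (A * D + B * C) - 2 * c * A * C,
   a * B ^ 2 - b * A * B + c * A ^ 2)

/-- Two integral binary quadratic forms are `Γ₀(6)`-equivalent if one is obtained from the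
other by the action of a matrix in `SL₂(ℤ)` whose lower-left entry is divisible by `6`. -/
def EquivQF (Q Q' : ℤ × ℤ × ℤ) : Prop :=
  ∃ γ : Matrix.SpecialLinearGroup (Fin 2) ℤ, 6 ∣ γ.1 1 0 ∧ actQF γ Q = Q'

lemma detE (γ : Matrix.SpecialLinearGroup (Fin 2) ℤ) :
    γ.1 0 0 * γ.1 1 1 - γ.1 0 1 * γ.1 1 0 = 1 := by
  have := γ.2; rwa [Matrix.det_fin_two] at this

def mkSL (A B C D : ℤ) (h : A * D - B * C = 1) : Matrix.SpecialLinearGroup (Fin 2) ℤ :=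
  ⟨!![A, B; C, D], by rw [Matrix.det_fin_two_of]; linarith⟩

@[simp] lemma mkSL_00 (A B C D : ℤ) (h) : (mkSL A B C D h).1 0 0 = A := rfl
@[simp] lemma mkSL_01 (A B C D : ℤ) (h) : (mkSL A B C D h).1 0 1 = B := rfl
@[simp] lemma mkSL_10 (A B C D : ℤ) (h) : (mkSL A B C D h).1 1 0 = C := rfl
@[simp] lemma mkSL_11 (A B C D : ℤ) (h) : (mkSL A B C D h).1 1 1 = D := rfl

lemma act_mul (γ δ : Matrix.SpecialLinearGroup (Fin 2) ℤ) (Q : ℤ × ℤ × ℤ) :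
    actQF (γ * δ) Q = actQF γ (actQF δ Q) := by
  simp only [actQF, Matrix.SpecialLinearGroup.coe_mul, Matrix.mul_apply, Fin.sum_univ_two]
  refine Prod.ext ?_ (Prod.ext ?_ ?_) <;> simp <;> ring

lemma act_one (Q : ℤ × ℤ × ℤ) : actQF 1 Q = Q := by
  simp [actQF]

lemma equiv_refl (Q : ℤ × ℤ × ℤ) : EquivQF Q Q :=
  ⟨1, by simp, act_one Q⟩

lemma equiv_trans {Q Q' Q'' : ℤ × ℤ × ℤ} (h1 : EquivQF Q Q') (h2 : EquivQF Q' Q'') :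
    EquivQF Q Q'' := by
  obtain ⟨γ, hγ, hact⟩ := h1
  obtain ⟨δ, hδ, hact'⟩ := h2
  refine ⟨δ * γ, ?_, by rw [act_mul, hact, hact']⟩
  have : (δ * γ).1 1 0 = δ.1 1 0 * γ.1 0 0 + δ.1 1 1 * γ.1 1 0 := by
    simp [Matrix.SpecialLinearGroup.coe_mul, Matrix.mul_apply, Fin.sum_univ_two]
  rw [this]
  exact dvd_add (hδ.mul_right _) (hγ.mul_left _)

lemma equiv_symm {Q Q' : ℤ × ℤ × ℤ} (h : EquivQF Q Q') : EquivQF Q' Q := by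
  obtain ⟨γ, hγ, hact⟩ := h
  have hdet := detE γ
  refine ⟨mkSL (γ.1 1 1) (-(γ.1 0 1)) (-(γ.1 1 0)) (γ.1 0 0) (by linarith), by
    simpa using hγ.neg_right, ?_⟩
  have hmul : mkSL (γ.1 1 1) (-(γ.1 0 1)) (-(γ.1 1 0)) (γ.1 0 0) (by linarith) * γ = 1 := by
    ext i j
    fin_cases i <;> fin_cases j <;>
      simp [Matrix.SpecialLinearGroup.coe_mul, Matrix.mul_apply, Fin.sum_univ_two] <;> linarith
  rw [← hact, ← act_mul, hmul, act_one]

lemma disc_act (γ : Matrix.SpecialLinearGroup (Fin 2) ℤ) (Q : ℤ × ℤ × ℤ) :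
    (actQF γ Q).2.1 ^ 2 - 4 * (actQF γ Q).1 * (actQF γ Q).2.2
      = Q.2.1 ^ 2 - 4 * Q.1 * Q.2.2 := by
  have hdet := detE γ
  simp only [actQF]
  linear_combination (Q.2.1 ^ 2 - 4 * Q.1 * Q.2.2) *
    (γ.1 0 0 * γ.1 1 1 - γ.1 0 1 * γ.1 1 0 + 1) * hdet

lemma equiv_translate (e c k : ℤ) : EquivQF (0, e, c) (0, e, c - e * k) := by
  refine ⟨mkSL 1 k 0 1 (by ring), by simp, ?_⟩
  simp only [actQF, mkSL_00, mkSL_01, mkSL_10, mkSL_11]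
  refine Prod.ext (by ring) (Prod.ext (by ring) (by ring))

/-- Key invariant: any `SL₂(ℤ)` matrix carrying `(0,e,c)` to `(0,e,c')` forces
`c ≡ c' (mod e)`. -/
lemma class_invariant (e c c' : ℤ) (he : e ≠ 0) (γ : Matrix.SpecialLinearGroup (Fin 2) ℤ)
    (h : actQF γ (0, e, c) = (0, e, c')) : e ∣ c' - c := by
  have hdet := detE γ
  simp only [actQF, Prod.mk.injEq] at h
  obtain ⟨h1, h2, h3⟩ := h
  set A := γ.1 0 0 with hA
  set B := γ.1 0 1 with hB
  set C := γ.1 1 0 with hC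
  set D := γ.1 1 1 with hD
  by_cases hC0 : C = 0
  · have hAD : A * D = 1 := by rw [hC0] at hdet; linarith
    rcases Int.mul_eq_one_iff_eq_one_or_neg_one.mp hAD with ⟨hA1, hD1⟩ | ⟨hA1, hD1⟩
    · exact ⟨-B, by rw [hA1] at h3; linarith⟩
    · exact ⟨B, by rw [hA1] at h3; nlinarith⟩
  · have hcC : c * C = e * D := by
      have hz : C * (c * C - e * D) = 0 := by linear_combination h1
      rcases mul_eq_zero.mp hz with h | h
      · exact absurd h hC0
      · linarith
    exfalso
    have h2e : 2 * (e * C) = 0 := by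
      linear_combination (-C) * h2 + (-2 * A * C) * hcC + (-e * C) * hdet
    have : e * C = 0 := by linarith
    rcases mul_eq_zero.mp this with h | h
    · exact he h
    · exact hC0 h

theorem square_disc_representatives (d : ℤ) (hd : d ≠ 0) (hd6 : Int.gcd d 6 = 1)
    (ω : ℤ) (hω : ω = -1 ∨ ω = 1) (a b c : ℤ)
    (hdisc : b ^ 2 - 4 * a * c = d ^ 2) (ha : 6 ∣ a)
    (hb : b ≡ ω * |d| [ZMOD 12]) :
    ∃! c₀ : ℤ, 0 ≤ c₀ ∧ c₀ < |d| ∧ EquivQF (a, b, c) (0, ω * |d|, c₀) := by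
  set e := ω * |d| with he_def
  have hω2 : ω ^ 2 = 1 := by rcases hω with h | h <;> simp [h]
  have hdpos : 0 < |d| := abs_pos.mpr hd
  have he2 : e ^ 2 = d ^ 2 := by rw [he_def, mul_pow, hω2, one_mul, sq_abs]
  have habs_e : |e| = |d| := by
    rw [he_def, abs_mul, abs_abs]
    rcases hω with h | h <;> simp [h]
  have h2d : ¬ (2:ℤ) ∣ d := by
    intro h
    have : (2:ℤ) ∣ (Int.gcd d 6 : ℤ) := Int.dvd_coe_gcd h (by norm_num)
    rw [hd6] at this; norm_num at this
  have h3d : ¬ (3:ℤ) ∣ d := by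
    intro h
    have : (3:ℤ) ∣ (Int.gcd d 6 : ℤ) := Int.dvd_coe_gcd h (by norm_num)
    rw [hd6] at this; norm_num at this
  have he0 : e ≠ 0 := by
    intro h
    rw [h, abs_zero] at habs_e
    exact hd (abs_eq_zero.mp habs_e.symm)
  have h3e : ¬ (3:ℤ) ∣ e := by
    intro h
    have h' : (3:ℤ) ∣ |e| := (dvd_abs 3 e).mpr h
    rw [habs_e] at h'
    exact h3d ((dvd_abs 3 d).mp h')
  have h2e : ¬ (2:ℤ) ∣ e := by
    intro h
    have h' : (2:ℤ) ∣ |e| := (dvd_abs 2 e).mpr h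
    rw [habs_e] at h'
    exact h2d ((dvd_abs 2 d).mp h')
  have hb12 : (12:ℤ) ∣ b - e := Int.ModEq.dvd hb.symm
  -- Step 1: (a,b,c) is equivalent to some (0, e, c'')
  have hstep : ∃ c'', EquivQF (a, b, c) (0, e, c'') := by
    by_cases ha0 : a = 0
    · rw [ha0] at hdisc
      have hfac : (b - e) * (b + e) = 0 := by linear_combination hdisc - he2
      rcases mul_eq_zero.mp hfac with h | h
      · have hbe : b = e := by linarith
        exact ⟨c, by rw [ha0, hbe]; exact equiv_refl _⟩
      · exfalso; apply h3e; omega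
    · set s : ℤ := -b - e with hs_def
      set g : ℤ := (Int.gcd s (2*a) : ℤ) with hg_def
      have h2a0 : 2*a ≠ 0 := mul_ne_zero two_ne_zero ha0
      have hgpos : 0 < g := by
        have h : 0 < Int.gcd s (2*a) := Int.gcd_pos_iff.mpr (Or.inr h2a0)
        rw [hg_def]; exact_mod_cast h
      have hds : g ∣ s := Int.gcd_dvd_left s (2*a)
      have hda : g ∣ 2*a := Int.gcd_dvd_right s (2*a)
      set D : ℤ := s / g with hD_def
      set Cp : ℤ := (2*a) / g with hCp_def
      have hgD : g * D = s := Int.mul_ediv_cancel' hds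
      have hgCp : g * Cp = 2*a := Int.mul_ediv_cancel' hda
      have hcop : Int.gcd D Cp = 1 := by
        exact Int.gcd_div_gcd_div_gcd (i := s) (j := 2*a)
          (Int.gcd_pos_iff.mpr (Or.inr h2a0))
      have h3s : ¬ (3:ℤ) ∣ s := by
        intro h; apply h3e; omega
      have h4s : ¬ (4:ℤ) ∣ s := by
        intro h; apply h2e; omega
      obtain ⟨a6, ha6⟩ := ha
      have h3C : (3:ℤ) ∣ Cp := by
        have h3g : ¬ (3:ℤ) ∣ g := fun h => h3s (h.trans hds)
        have h3m : (3:ℤ) ∣ g * Cp := by rw [hgCp]; exact ⟨4*a6, by omega⟩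
        rcases (Int.prime_three.dvd_mul).mp h3m with h | h
        · exact absurd h h3g
        · exact h
      have h2C : (2:ℤ) ∣ Cp := by
        by_contra h2C
        have h4 : (2:ℤ)^2 ∣ g * Cp := by rw [hgCp]; exact ⟨3*a6, by omega⟩
        have h4g : (2:ℤ)^2 ∣ g := Int.prime_two.pow_dvd_of_dvd_mul_right 2 h2C h4
        apply h4s
        have : (4:ℤ) ∣ g := by norm_num at h4g; exact h4g
        exact this.trans hds
      have h6Cp : (6:ℤ) ∣ Cp := by omega
      set C : ℤ := -Cp with hC_def
      have hgC : g * C = -(2*a) := by rw [hC_def, mul_neg, hgCp]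
      have h6C : (6:ℤ) ∣ C := (dvd_neg).mpr h6Cp
      set A : ℤ := Int.gcdA D Cp with hA_def
      set B : ℤ := Int.gcdB D Cp with hB_def
      have hbez := Int.gcd_eq_gcd_ab D Cp
      rw [hcop] at hbez
      have hdet : A * D - B * C = 1 := by
        rw [hC_def]; push_cast at hbez; linarith
      have hzero : a * D^2 - b * C * D + c * C^2 = 0 := by
        have h0 : g^2 * (a * D^2 - b * C * D + c * C^2) = 0 := by
          have expand : g^2 * (a * D^2 - b*C*D + c*C^2)
              = a*(g*D)^2 - b*(g*C)*(g*D) + c*(g*C)^2 := by ring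
          rw [expand, hgD, hgC, hs_def]
          linear_combination a * he2 - a * hdisc
        exact (mul_eq_zero.mp h0).resolve_left (pow_ne_zero 2 (ne_of_gt hgpos))
      set b' : ℤ := -2*a*B*D + b*(A*D + B*C) - 2*c*A*C with hb'_def
      set c' : ℤ := a*B^2 - b*A*B + c*A^2 with hc'_def
      have hact : actQF (mkSL A B C D hdet) (a,b,c) = (0, b', c') := by
        simp only [actQF, mkSL_00, mkSL_01, mkSL_10, mkSL_11]
        exact Prod.ext hzero (Prod.ext rfl rfl)
      obtain ⟨C6, hC6⟩ := h6C
      have hb'b : (12:ℤ) ∣ b' - b := by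
        refine ⟨-a6*B*D + b*B*C6 - c*A*C6, ?_⟩
        rw [hb'_def]
        linear_combination (-2*B*D) * ha6 + (2*b*B - 2*c*A) * hC6 + b * hdet
      have hb'e : b' = e := by
        have hdsc := disc_act (mkSL A B C D hdet) (a,b,c)
        rw [hact] at hdsc
        simp only at hdsc
        have hb'2 : b' ^ 2 = e ^ 2 := by
          rw [he2]; linear_combination hdsc + hdisc
        have hfac : (b' - e) * (b' + e) = 0 := by linear_combination hb'2
        rcases mul_eq_zero.mp hfac with h | h
        · linarith
        · exfalso; apply h3e; omega
      refine ⟨c', ⟨mkSL A B C D hdet, ?_, by rw [hact, hb'e]⟩⟩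
      rw [mkSL_10]
      exact ⟨C6, hC6⟩
  obtain ⟨c'', hc''⟩ := hstep
  set c₀ := c'' % |d| with hc₀def
  have hc₀0 : 0 ≤ c₀ := Int.emod_nonneg _ (ne_of_gt hdpos)
  have hc₀lt : c₀ < |d| := Int.emod_lt_of_pos _ hdpos
  have heω : e * ω = |d| := by rw [he_def]; linear_combination |d| * hω2
  have hk : c'' - e * (ω * (c'' / |d|)) = c₀ := by
    rw [hc₀def, Int.emod_def]
    linear_combination (-(c'' / |d|)) * heω
  have htrans : EquivQF (0, e, c'') (0, e, c₀) := by
    have h := equiv_translate e c'' (ω * (c'' / |d|))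
    rwa [hk] at h
  have hmain : EquivQF (a, b, c) (0, e, c₀) := equiv_trans hc'' htrans
  refine ⟨c₀, ⟨hc₀0, hc₀lt, hmain⟩, ?_⟩
  rintro y ⟨hy0, hylt, hyequiv⟩
  have hEq : EquivQF (0, e, c₀) (0, e, y) := equiv_trans (equiv_symm hmain) hyequiv
  obtain ⟨γ, -, hγact⟩ := hEq
  have hdvd : e ∣ y - c₀ := class_invariant e c₀ y he0 γ hγact
  have hdvd' : |d| ∣ y - c₀ := by rw [← habs_e]; exact (abs_dvd _ _).mpr hdvd
  obtain ⟨t, ht⟩ := hdvd'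
  have ht0 : t = 0 := by nlinarith
  rw [ht0, mul_zero] at ht
  linarith
end

section
/- Let D ≡ 1 (mod 24) be a positive integer with a factorization D = d·d' where d, d' ≡ 1 (mod 24) are negative and d is squarefree, and let χ_d be a genus character for this factorization. Then for every integer c ≥ 1, ∑_b (12/b) · χ_d(6c, b, (b²−D)/(24c)) = 0, where the sum runs over the integers b with 0 ≤ b < 12c and b² ≡ D (mod 24c). -/
/-- The Kronecker symbol `(12/b)`. -/
def kron12 (b : ℤ) : ℤ :=
  if b % 12 = 1 ∨ b % 12 = 11 then 1 else if b % 12 = 5 ∨ b % 12 = 7 then -1 else 0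

/-- The Kronecker symbol `(d/m)` for `d ≡ 1 (mod 8)` and `m ≥ 1`: the Jacobi symbol of `d`
at the odd part of `m`. -/
def kron (d : ℤ) (m : ℕ) : ℤ := jacobiSym d (m / 2 ^ m.factorization 2)

lemma kron12_flip {x y : ℤ} (hx : x % 12 = 1 ∨ x % 12 = 5 ∨ x % 12 = 7 ∨ x % 12 = 11)
    (h : y % 12 = x * 7 % 12) : kron12 y = - kron12 x := by
  rcases hx with h1|h1|h1|h1 <;>
    [(have hy : y % 12 = 7 := by omega); (have hy : y % 12 = 11 := by omega);
     (have hy : y % 12 = 1 := by omega); (have hy : y % 12 = 5 := by omega)] <;>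
    simp [kron12, h1, hy]

lemma kron_eq_jacobi (d : ℤ) (A : ℕ) (hA : (A : ℤ) = -d) (hA24 : A % 24 = 23)
    (n : ℕ) (hn : n ≠ 0) : kron d n = jacobiSym (n : ℤ) A := by
  have hA2 : A % 2 = 1 := by omega
  have hA4 : A % 4 = 3 := by omega
  have hA8 : A % 8 = 7 := by omega
  have hAodd : Odd A := Nat.odd_iff.mpr hA2
  set t := n.factorization 2 with ht
  set k := n / 2 ^ t with hk
  have hnk : 2 ^ t * k = n := Nat.ordProj_mul_ordCompl_eq_self n 2
  have hk2 : ¬ 2 ∣ k := Nat.not_dvd_ordCompl Nat.prime_two hn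
  have hkodd : Odd k := Nat.odd_iff.mpr (Nat.two_dvd_ne_zero.mp hk2)
  have hd : d = -(A : ℤ) := by omega
  have lhs : kron d n = jacobiSym (-1 : ℤ) k * jacobiSym (A : ℤ) k := by
    rw [kron, ← hk, hd]
    rw [show (-(A:ℤ)) = -1 * (A:ℤ) by ring, jacobiSym.mul_left]
  have hrec : jacobiSym (-1 : ℤ) k * jacobiSym (A : ℤ) k = jacobiSym (k : ℤ) A := by
    have hqr := jacobiSym.quadratic_reciprocity_if hA2 (Nat.odd_iff.mp hkodd)
    rcases Nat.odd_mod_four_iff.mp (Nat.odd_iff.mp hkodd) with h4 | h4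
    · rw [jacobiSym.at_neg_one hkodd, ZMod.χ₄_nat_one_mod_four h4, ← hqr]
      simp [h4]
    · rw [jacobiSym.at_neg_one hkodd, ZMod.χ₄_nat_three_mod_four h4, ← hqr]
      simp [hA4, h4]
  have rhs : jacobiSym (n : ℤ) A = jacobiSym (k : ℤ) A := by
    rw [← hnk]
    push_cast
    rw [jacobiSym.mul_left, jacobiSym.pow_left, jacobiSym.at_two hAodd,
      ZMod.χ₈_nat_eq_if_mod_eight]
    simp [hA2, hA8]
  rw [lhs, hrec, rhs]

set_option maxHeartbeats 2000000 in
theorem genus_character_sum_vanishes (D d d' : ℤ)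
    (hD : 0 < D) (hD24 : D ≡ 1 [ZMOD 24])
    (hdneg : d < 0) (hd'neg : d' < 0)
    (hd24 : d ≡ 1 [ZMOD 24]) (hd'24 : d' ≡ 1 [ZMOD 24])
    (hsf : Squarefree d) (hfac : D = d * d')
    (χ : ℤ × ℤ × ℤ → ℤ)
    (hχ0 : ∀ a b c : ℤ, b ^ 2 - 4 * a * c = D →
      1 < Int.gcd (Int.gcd (Int.gcd a b : ℤ) c : ℤ) d → χ (a, b, c) = 0)
    (hχ1 : ∀ a b c : ℤ, b ^ 2 - 4 * a * c = D →
      Int.gcd (Int.gcd (Int.gcd a b : ℤ) c : ℤ) d = 1 →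
      ∀ m : ℕ, 1 ≤ m → Int.gcd (m : ℤ) d = 1 →
        (∃ x y : ℤ, (m : ℤ) = a * x ^ 2 + b * x * y + c * y ^ 2) →
        χ (a, b, c) = kron d m) :
    ∀ c : ℕ, 1 ≤ c →
      ∑ b ∈ (Finset.range (12 * c)).filter
          (fun b : ℕ => ((b : ℤ) ^ 2 - D) % (24 * (c : ℤ)) = 0),
        kron12 (b : ℤ) * χ (6 * (c : ℤ), (b : ℤ), ((b : ℤ) ^ 2 - D) / (24 * (c : ℤ))) = 0 := by
  intro c hc
  have hcz : (1:ℤ) ≤ (c:ℤ) := by exact_mod_cast hc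
  have h12pos : (0:ℤ) < 12 * c := by linarith
  have h24pos : (0:ℤ) < 24 * c := by linarith
  have hdne : d ≠ 0 := by omega
  have hd24' : d % 24 = 1 := by have := hd24; simpa [Int.ModEq] using this
  have hD24' : D % 24 = 1 := by have := hD24; simpa [Int.ModEq] using this
  set A : ℕ := d.natAbs with hAdef
  have hAd : (A:ℤ) = -d := by omega
  have hA24 : A % 24 = 23 := by omega
  have hAsf : Squarefree A := Int.squarefree_natAbs.mpr hsf
  have hAne : A ≠ 0 := by omega
  -- g and h
  set g : ℕ := Int.gcd d (c:ℤ) with hgdef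
  have hgd : (g:ℤ) ∣ d := Int.gcd_dvd_left _ _
  have hgcZ : (g:ℤ) ∣ (c:ℤ) := Int.gcd_dvd_right _ _
  have hgA : g ∣ A := by
    have : (g:ℤ) ∣ (A:ℤ) := by rw [hAd]; exact dvd_neg.mpr hgd
    exact_mod_cast this
  have hgc : g ∣ c := by exact_mod_cast hgcZ
  have hgne : g ≠ 0 := fun h0 => hdne (Int.gcd_eq_zero_iff.mp (hgdef ▸ h0)).1
  set h : ℕ := A / g with hhdef
  have hAgh : A = g * h := (Nat.mul_div_cancel' hgA).symm
  have hhne : h ≠ 0 := by intro h0; rw [h0, mul_zero] at hAgh; exact hAne hAgh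
  have hhA : h ∣ A := ⟨g, by rw [hAgh, Nat.mul_comm]⟩
  have hhd : (h:ℤ) ∣ d := by
    have : (h:ℤ) ∣ (A:ℤ) := by exact_mod_cast hhA
    rw [hAd] at this; exact (dvd_neg.mp this)
  have hdD : d ∣ D := hfac ▸ dvd_mul_right d d'
  -- prime divisors of A are ≥ 5
  have hA2 : ¬ 2 ∣ A := by omega
  have hA3 : ¬ 3 ∣ A := by omega
  have hp6 : ∀ p : ℕ, p.Prime → p ∣ A → p ∣ 12 * c → p ∣ g := by
    intro p pp pA p12
    have p2 : p ≠ 2 := fun h => hA2 (h ▸ pA)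
    have p3 : p ≠ 3 := fun h => hA3 (h ▸ pA)
    have : p ∣ 12 ∨ p ∣ c := (Nat.Prime.dvd_mul pp).mp p12
    rcases this with h12 | hpc
    · exfalso
      have h2le := pp.two_le
      have hle : p ≤ 12 := Nat.le_of_dvd (by norm_num) h12
      interval_cases p <;> first | exact p2 rfl | exact p3 rfl | (revert pp h12; decide)
    · refine Nat.dvd_gcd ?_ ?_ <;> simp [Int.natAbs_natCast, ← hAdef, pA, hpc]
  -- coprimality of h with 12c
  have hcop : Nat.gcd (12 * c) h = 1 := by
    by_contra hne
    obtain ⟨p, pp, pdvd⟩ := Nat.exists_prime_and_dvd hne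
    have ph : p ∣ h := pdvd.trans (Nat.gcd_dvd_right _ _)
    have p12 : p ∣ 12 * c := pdvd.trans (Nat.gcd_dvd_left _ _)
    have pA : p ∣ A := ph.trans hhA
    have pg : p ∣ g := hp6 p pp pA p12
    have : p * p ∣ A := by rw [hAgh]; exact mul_dvd_mul pg ph
    exact pp.not_isUnit (hAsf p this)
  -- construction of u
  obtain ⟨u, hu24, hu12⟩ : ∃ u : ℤ, (24*(c:ℤ)) ∣ u^2 - 1 ∧ u % 12 = 7 := by
    have h12ne : 12 * c ≠ 0 := by omega
    set T : ℕ := 2 ^ ((12*c).factorization 2) with hT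
    set O : ℕ := (12*c) / T with hO
    have hTO : T * O = 12 * c := Nat.ordProj_mul_ordCompl_eq_self (12*c) 2
    have hTOZ : (T:ℤ) * (O:ℤ) = 12 * (c:ℤ) := by exact_mod_cast hTO
    have hOodd : ¬ 2 ∣ O := Nat.not_dvd_ordCompl Nat.prime_two h12ne
    have h3O : (3:ℤ) ∣ (O:ℤ) := by
      have h3 : 3 ∣ T * O := by rw [hTO]; exact ⟨4*c, by ring⟩
      rcases (Nat.Prime.dvd_mul (by norm_num)).mp h3 with hh | hh
      · exfalso
        have h3T : (3:ℕ) ∣ 2 ^ ((12*c).factorization 2) := hT ▸ hh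
        have := Nat.Prime.dvd_of_dvd_pow (p := 3) (by norm_num) h3T
        norm_num at this
      · exact_mod_cast hh
    have hcop2 : Nat.Coprime 2 O := (Nat.Prime.coprime_iff_not_dvd Nat.prime_two).mpr hOodd
    have hcopT : Nat.Coprime T O := Nat.Coprime.pow_left _ hcop2
    have hcopTO : Nat.Coprime (2 * T) O := Nat.Coprime.mul hcop2 hcopT
    have hbez := Nat.gcd_eq_gcd_ab (2*T) O
    rw [hcopTO] at hbez
    set a : ℤ := Nat.gcdA (2*T) O with ha
    set e : ℤ := Nat.gcdB (2*T) O with he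
    have key : (1:ℤ) = 2*(T:ℤ)*a + (O:ℤ)*e := by push_cast at hbez; linarith
    obtain ⟨O₁, hO₁⟩ := h3O
    refine ⟨1 - 2*(O:ℤ)*e, ⟨-4*a*e, ?_⟩, ?_⟩
    · linear_combination (-4*(O:ℤ)*e)*key + (-8*a*e)*hTOZ
    · have h4 : (4:ℤ) ∣ (1 - 2*(O:ℤ)*e) + 1 := ⟨(T:ℤ)*a, by linear_combination 2*key⟩
      have h3 : (3:ℤ) ∣ (1 - 2*(O:ℤ)*e) - 1 := ⟨-2*O₁*e, by rw [hO₁]; ring⟩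
      omega
  -- the involution
  set σ : ℕ → ℕ := fun b => (((b:ℤ) * u) % (12*(c:ℤ))).toNat with hσdef
  set ℓ : ℕ → ℤ := fun b => ((b : ℤ) ^ 2 - D) / (24 * (c:ℤ)) with hℓdef
  have hσval : ∀ b : ℕ, ((σ b : ℕ) : ℤ) = ((b:ℤ) * u) % (12*(c:ℤ)) :=
    fun b => Int.toNat_of_nonneg (Int.emod_nonneg _ (by omega))
  have hσlt : ∀ b : ℕ, σ b < 12 * c := by
    intro b
    have h1 : ((b:ℤ) * u) % (12*(c:ℤ)) < 12 * c := Int.emod_lt_of_pos _ h12pos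
    have h2 := hσval b
    omega
  -- key divisibility
  have hgb : ∀ b : ℕ, (24*(c:ℤ)) ∣ ((b:ℤ)^2 - D) → (g:ℤ) ∣ (b:ℤ) := by
    intro b hb
    have h1 : (g:ℤ) ∣ ((b:ℤ))^2 := by
      have hgD : (g:ℤ) ∣ D := hgd.trans hdD
      have h24 : (g:ℤ) ∣ (24*(c:ℤ)) := Dvd.dvd.mul_left hgcZ 24
      have hx := dvd_add (h24.trans hb) hgD
      simpa using hx
    have h2 : g ∣ b^2 := by exact_mod_cast h1
    have hsg : Squarefree g := hAsf.squarefree_of_dvd hgA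
    have h3 : g ∣ b := (hsg.dvd_pow_iff_dvd two_ne_zero).mp h2
    exact_mod_cast h3
  -- ℓ basics
  have hdisc : ∀ b : ℕ, (24*(c:ℤ)) ∣ ((b:ℤ)^2 - D) → 24*(c:ℤ)*(ℓ b) = (b:ℤ)^2 - D :=
    fun b hb => Int.mul_ediv_cancel' hb
  -- key divisibility for the involution
  have hdiff : ∀ b : ℕ, (24*(c:ℤ)) ∣ ((b:ℤ)^2 - D) →
      (24*(c:ℤ)*(g:ℤ)) ∣ (((σ b):ℤ)^2 - (b:ℤ)^2) := by
    intro b hb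
    obtain ⟨b₁, hb₁⟩ := hgb b hb
    obtain ⟨c₁, hc₁⟩ := hgcZ
    obtain ⟨w, hw⟩ := hu24
    have he : ((σ b):ℤ) = (b:ℤ)*u - 12*(c:ℤ)*(((b:ℤ)*u)/(12*(c:ℤ))) := by
      rw [hσval b, Int.emod_def]
    set k := ((b:ℤ)*u)/(12*(c:ℤ)) with hkdef
    refine ⟨(g:ℤ)*b₁^2*w - k*b₁*u + 6*c₁*k^2, ?_⟩
    rw [he]
    linear_combination ((b:ℤ)^2) * hw + (24*(c:ℤ)*(w*((b:ℤ)+(g:ℤ)*b₁) - k*u)) * hb₁ + (144*(c:ℤ)*k^2) * hc₁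
  have hσmemZ : ∀ b : ℕ, (24*(c:ℤ)) ∣ ((b:ℤ)^2 - D) → (24*(c:ℤ)) ∣ (((σ b):ℤ)^2 - D) := by
    intro b hb
    have h1 : (24*(c:ℤ)) ∣ (((σ b):ℤ)^2 - (b:ℤ)^2) := (Dvd.intro _ rfl).trans (hdiff b hb)
    have := dvd_add h1 hb
    simpa using this
  have hℓdiff : ∀ b : ℕ, (24*(c:ℤ)) ∣ ((b:ℤ)^2 - D) → (g:ℤ) ∣ (ℓ (σ b) - ℓ b) := by
    intro b hb
    obtain ⟨y, hy⟩ := hdiff b hb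
    refine ⟨y, ?_⟩
    have h1 := hdisc b hb
    have h2 := hdisc (σ b) (hσmemZ b hb)
    have h3 : 24*(c:ℤ) * (ℓ (σ b) - ℓ b) = 24*(c:ℤ) * ((g:ℤ)*y) := by
      rw [mul_sub, h1, h2]; linear_combination hy
    have := mul_left_cancel₀ (by positivity : (24*(c:ℤ)) ≠ 0) h3
    linarith [this]
  have hgσ : ∀ b : ℕ, (24*(c:ℤ)) ∣ ((b:ℤ)^2 - D) → (g:ℤ) ∣ ((σ b):ℤ) := by
    intro b hb
    rw [hσval b, Int.emod_def]
    exact dvd_sub ((hgb b hb).mul_right u) (Dvd.dvd.mul_right (hgcZ.mul_left 12) _)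
  have hσσ : ∀ b : ℕ, b < 12*c → σ (σ b) = b := by
    intro b hblt
    obtain ⟨w, hw⟩ := hu24
    have h1 : ((σ (σ b)):ℤ) = (((σ b):ℤ) * u) % (12*(c:ℤ)) := hσval _
    rw [hσval b] at h1
    have h2 : (((b:ℤ)*u) % (12*(c:ℤ)) * u) % (12*(c:ℤ)) = ((b:ℤ)*u*u) % (12*(c:ℤ)) := by
      rw [Int.mul_emod, Int.emod_emod_of_dvd _ (dvd_refl _), ← Int.mul_emod]
    have h3 : (b:ℤ)*u*u = (b:ℤ) + (12*(c:ℤ))*((b:ℤ)*2*w) := by linear_combination (b:ℤ)*hw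
    rw [h2, h3, Int.add_mul_emod_self_left] at h1
    have h4 : (b:ℤ) % (12*(c:ℤ)) = (b:ℤ) := Int.emod_eq_of_lt (by positivity) (by exact_mod_cast hblt)
    rw [h4] at h1
    exact_mod_cast h1
  -- congruence mod 12
  have hb12 : ∀ b : ℕ, (24*(c:ℤ)) ∣ ((b:ℤ)^2 - D) →
      ((b:ℤ) % 12 = 1 ∨ (b:ℤ) % 12 = 5 ∨ (b:ℤ) % 12 = 7 ∨ (b:ℤ) % 12 = 11) := by
    intro b hb
    have h24 : (24:ℤ) ∣ ((b:ℤ)^2 - D) := (Dvd.intro _ rfl).trans hb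
    have hD1 : (24:ℤ) ∣ (D - 1) := by omega
    have h1 : (24:ℤ) ∣ ((b:ℤ)^2 - 1) := by
      have := dvd_add h24 hD1
      simpa using this
    obtain ⟨q, r, hr0, hr12, hbqr⟩ : ∃ q r : ℤ, 0 ≤ r ∧ r < 12 ∧ (b:ℤ) = 12*q + r :=
      ⟨(b:ℤ)/12, (b:ℤ)%12, Int.emod_nonneg _ (by norm_num), Int.emod_lt_of_pos _ (by norm_num),
        (Int.mul_ediv_add_emod _ _).symm⟩
    obtain ⟨z, hz⟩ := h1
    have h2 : (24:ℤ) ∣ (r^2 - 1) := ⟨z - 6*q^2 - q*r, by linear_combination hz - ((b:ℤ)+12*q+r)*hbqr⟩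
    have hmod : (b:ℤ) % 12 = r := by omega
    rw [hmod]
    interval_cases r <;> norm_num at h2 <;> norm_num
  have hσ12 : ∀ b : ℕ, ((σ b):ℤ) % 12 = (b:ℤ)*7 % 12 := by
    intro b
    rw [hσval b, Int.emod_emod_of_dvd _ (⟨(c:ℤ), by ring⟩ : (12:ℤ) ∣ 12*(c:ℤ))]
    obtain ⟨v, hv⟩ : (12:ℤ) ∣ u - 7 := by omega
    have h1 : (b:ℤ)*u = (b:ℤ)*7 + 12*((b:ℤ)*v) := by linear_combination (b:ℤ)*hv
    rw [h1, Int.add_mul_emod_self_left]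
  -- the gcd expression
  set G : ℕ → ℕ := fun b => Int.gcd (Int.gcd (Int.gcd (6*(c:ℤ)) ((b:ℤ)) : ℤ) (ℓ b) : ℤ) d with hGdef
  have hGne0 : ∀ b : ℕ, G b ≠ 0 := by
    intro b h0
    exact hdne (Int.gcd_eq_zero_iff.mp h0).2
  have hGtrans : ∀ b : ℕ, (24*(c:ℤ)) ∣ ((b:ℤ)^2 - D) → 1 < G b → 1 < G (σ b) := by
    intro b hb hG
    obtain ⟨p, pp, pG⟩ := Nat.exists_prime_and_dvd (by omega : G b ≠ 1)
    have pGZ : (p:ℤ) ∣ ((G b : ℕ):ℤ) := Int.natCast_dvd_natCast.mpr pG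
    have pd : (p:ℤ) ∣ d := pGZ.trans (Int.gcd_dvd_right _ _)
    have p1 : (p:ℤ) ∣ ((Int.gcd (Int.gcd (6*(c:ℤ)) ((b:ℤ)) : ℤ) (ℓ b) : ℕ):ℤ) :=
      pGZ.trans (Int.gcd_dvd_left _ _)
    have pℓ : (p:ℤ) ∣ ℓ b := p1.trans (Int.gcd_dvd_right _ _)
    have p2 : (p:ℤ) ∣ ((Int.gcd (6*(c:ℤ)) ((b:ℤ)) : ℕ):ℤ) := p1.trans (Int.gcd_dvd_left _ _)
    have p6c : (p:ℤ) ∣ 6*(c:ℤ) := p2.trans (Int.gcd_dvd_left _ _)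
    have pA : p ∣ A := by
      have : (p:ℤ) ∣ (A:ℤ) := hAd ▸ (dvd_neg.mpr pd)
      exact_mod_cast this
    have p12c : p ∣ 12*c := by
      obtain ⟨y, hy⟩ := p6c
      have hPP : (p:ℤ) ∣ ((12*c:ℕ):ℤ) := ⟨2*y, by push_cast; linarith⟩
      exact_mod_cast hPP
    have pg : p ∣ g := hp6 p pp pA p12c
    have pgZ : (p:ℤ) ∣ (g:ℤ) := Int.natCast_dvd_natCast.mpr pg
    have pσ : (p:ℤ) ∣ ((σ b):ℤ) := pgZ.trans (hgσ b hb)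
    have pℓσ : (p:ℤ) ∣ ℓ (σ b) := by
      have h1 : (p:ℤ) ∣ (ℓ (σ b) - ℓ b) := pgZ.trans (hℓdiff b hb)
      have := dvd_add h1 pℓ
      simpa using this
    have pGσ : (p:ℤ) ∣ ((G (σ b) : ℕ):ℤ) :=
      Int.dvd_coe_gcd (Int.dvd_coe_gcd (Int.dvd_coe_gcd p6c pσ) pℓσ) pd
    have : p ∣ G (σ b) := by exact_mod_cast pGσ
    have := Nat.le_of_dvd (Nat.pos_of_ne_zero (hGne0 (σ b))) this
    have := pp.two_le
    omega
  -- value of χ when the content is coprime to d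
  have chiVal : ∀ b : ℕ, (24*(c:ℤ)) ∣ ((b:ℤ)^2 - D) → G b = 1 →
      χ (6*(c:ℤ), (b:ℤ), ℓ b) = jacobiSym (ℓ b) g * jacobiSym (24*(c:ℤ)) h := by
    intro b hb hG1
    have hbez := Nat.gcd_eq_gcd_ab (12*c) h
    rw [hcop] at hbez
    set v : ℤ := Nat.gcdA (12*c) h with hv
    set vb : ℤ := Nat.gcdB (12*c) h with hvb
    have key : (1:ℤ) = 12*(c:ℤ)*v + (h:ℤ)*vb := by push_cast at hbez; linarith
    set s : ℤ := (b:ℤ) + 12*(c:ℤ)*(v*(1-(b:ℤ))) with hs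
    set t : ℤ := |D| + 24*(c:ℤ) + |s| + 1 with htdef
    set x : ℤ := v*(1-(b:ℤ)) + (h:ℤ)*t with hx
    set β : ℤ := (b:ℤ) + 12*(c:ℤ)*x with hβ
    have hβ1 : (h:ℤ) ∣ β - 1 :=
      ⟨(1-(b:ℤ))*(-vb) + 12*(c:ℤ)*t, by rw [hβ, hx]; linear_combination ((b:ℤ)-1)*key⟩
    have h1h : (1:ℤ) ≤ (h:ℤ) := by exact_mod_cast Nat.one_le_iff_ne_zero.mpr hhne
    have hDabs : |D| = D := abs_of_pos hD
    have hβpos : 1 + D + 24*(c:ℤ) ≤ β := by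
      have hch : (1:ℤ) ≤ 12*(c:ℤ)*(h:ℤ) := by
        have h0 : (1:ℤ)*1 ≤ (12*(c:ℤ))*(h:ℤ) :=
          mul_le_mul (by linarith) h1h (by norm_num) (by linarith)
        linarith
      have ht1 : 0 ≤ t := by
        have hd1 := abs_nonneg D; have hd2 := abs_nonneg s
        rw [htdef]; linarith
      have h6 : t ≤ 12*(c:ℤ)*(h:ℤ)*t := le_mul_of_one_le_left ht1 hch
      have h2 : β = s + 12*(c:ℤ)*(h:ℤ)*t := by rw [hβ, hx]; ring
      have h4 : -|s| ≤ s := neg_abs_le s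
      have h5 : t = D + 24*(c:ℤ) + |s| + 1 := by rw [htdef, hDabs]
      linarith
    clear_value v vb s t x β
    set m : ℤ := 6*(c:ℤ)*x^2 + (b:ℤ)*x + ℓ b with hm
    have h24ℓ : 24*(c:ℤ)*(ℓ b) = (b:ℤ)^2 - D := hdisc b hb
    have hm24 : 24*(c:ℤ)*m = β^2 - D := by rw [hm, hβ]; linear_combination h24ℓ
    clear_value m
    have hm1 : 1 ≤ m := by
      have hb0 : (0:ℤ) ≤ β - 1 := by linarith
      have hb2 : (0:ℤ) ≤ β := by linarith
      have hsq : 0 ≤ β*(β-1) := mul_nonneg hb2 hb0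
      have h7 : 24*(c:ℤ)*1 ≤ β^2 - D := by nlinarith [hsq]
      rw [← hm24] at h7
      exact le_of_mul_le_mul_left h7 h24pos
    have hmd : Int.gcd m d = 1 := by
      by_contra hne
      obtain ⟨p, pp, pdvd⟩ := Nat.exists_prime_and_dvd hne
      have pm : (p:ℤ) ∣ m := (Int.natCast_dvd_natCast.mpr pdvd).trans (Int.gcd_dvd_left _ _)
      have pd : (p:ℤ) ∣ d := (Int.natCast_dvd_natCast.mpr pdvd).trans (Int.gcd_dvd_right _ _)
      have pA : p ∣ A := by
        have : (p:ℤ) ∣ (A:ℤ) := hAd ▸ (dvd_neg.mpr pd)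
        exact_mod_cast this
      rcases (Nat.Prime.dvd_mul pp).mp (hAgh ▸ pA) with pg | ph
      · have pgZ : (p:ℤ) ∣ (g:ℤ) := Int.natCast_dvd_natCast.mpr pg
        have pc : (p:ℤ) ∣ (c:ℤ) := pgZ.trans hgcZ
        have pb : (p:ℤ) ∣ (b:ℤ) := pgZ.trans (hgb b hb)
        have pℓ : (p:ℤ) ∣ ℓ b := by
          have hrw : ℓ b = m - 6*(c:ℤ)*x^2 - (b:ℤ)*x := by rw [hm]; ring
          rw [hrw]
          exact dvd_sub (dvd_sub pm ((pc.mul_left 6).mul_right (x^2))) (pb.mul_right x)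
        have pG : (p:ℤ) ∣ ((G b : ℕ):ℤ) :=
          Int.dvd_coe_gcd (Int.dvd_coe_gcd (Int.dvd_coe_gcd (pc.mul_left 6) pb) pℓ) pd
        rw [hG1] at pG
        have hp1 : p ∣ 1 := by exact_mod_cast pG
        exact pp.one_lt.ne' (Nat.dvd_one.mp hp1)
      · have phZ : (p:ℤ) ∣ (h:ℤ) := Int.natCast_dvd_natCast.mpr ph
        have pβ2 : (p:ℤ) ∣ β^2 := by
          have hrw : β^2 = 24*(c:ℤ)*m + D := by linear_combination -hm24
          rw [hrw]
          exact dvd_add (pm.mul_left _) ((phZ.trans hhd).trans hdD)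
        have pβ : (p:ℤ) ∣ β := (Nat.prime_iff_prime_int.mp pp).dvd_of_dvd_pow pβ2
        have pone : (p:ℤ) ∣ 1 := by
          have := dvd_sub pβ (phZ.trans hβ1)
          simpa using this
        have hp1 : p ∣ 1 := by exact_mod_cast pone
        exact pp.one_lt.ne' (Nat.dvd_one.mp hp1)
    have hdisc2 : (b:ℤ)^2 - 4*(6*(c:ℤ))*(ℓ b) = D := by linear_combination -h24ℓ
    have hmnn : (0:ℤ) ≤ m := by linarith
    have hmcast : ((m.toNat:ℕ):ℤ) = m := Int.toNat_of_nonneg hmnn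
    have hmge : 1 ≤ m.toNat := by omega
    have hgcdm : Int.gcd ((m.toNat:ℕ):ℤ) d = 1 := by rw [hmcast]; exact hmd
    have hrepr : ∃ x' y' : ℤ, ((m.toNat:ℕ):ℤ) = 6*(c:ℤ)*x'^2 + (b:ℤ)*x'*y' + (ℓ b)*y'^2 :=
      ⟨x, 1, by rw [hmcast, hm]; ring⟩
    have hχval := hχ1 (6*(c:ℤ)) ((b:ℤ)) (ℓ b) hdisc2 hG1 m.toNat hmge hgcdm hrepr
    rw [hχval, kron_eq_jacobi d A hAd hA24 m.toNat (by omega), hmcast]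
    rw [hAgh, jacobiSym.mul_right' m hgne hhne]
    congr 1
    · have hdvd : (g:ℤ) ∣ ℓ b - m := by
        have hrw : ℓ b - m = -((6*(c:ℤ)*x + (b:ℤ))*x) := by rw [hm]; ring
        rw [hrw]
        exact ((dvd_add ((hgcZ.mul_left 6).mul_right x) (hgb b hb)).mul_right x).neg_right
      exact jacobiSym.mod_left' (Int.modEq_iff_dvd.mpr hdvd)
    · have hβh : jacobiSym β h = 1 := by
        have hme : β ≡ 1 [ZMOD (h:ℤ)] := Int.ModEq.symm (Int.modEq_iff_dvd.mpr hβ1)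
        rw [jacobiSym.mod_left' hme, jacobiSym.one_left]
      have hprod : jacobiSym (24*(c:ℤ)) h * jacobiSym m h = 1 := by
        rw [← jacobiSym.mul_left]
        have hdvd2 : (h:ℤ) ∣ β^2 - 24*(c:ℤ)*m := by
          have hrw : β^2 - 24*(c:ℤ)*m = D := by linear_combination -hm24
          rw [hrw]; exact hhd.trans hdD
        rw [jacobiSym.mod_left' (Int.modEq_iff_dvd.mpr hdvd2), jacobiSym.pow_left, hβh, one_pow]
      rcases Int.mul_eq_one_iff_eq_one_or_neg_one.mp hprod with ⟨e1,e2⟩|⟨e1,e2⟩ <;> rw [e1, e2]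
  -- χ is constant along the involution
  have hχeq : ∀ b : ℕ, b < 12*c → (24*(c:ℤ)) ∣ ((b:ℤ)^2 - D) →
      χ (6*(c:ℤ), (b:ℤ), ℓ b) = χ (6*(c:ℤ), ((σ b):ℤ), ℓ (σ b)) := by
    intro b hblt hb
    have hσb := hσmemZ b hb
    have hdisc2 : (b:ℤ)^2 - 4*(6*(c:ℤ))*(ℓ b) = D := by linear_combination -hdisc b hb
    have hdisc3 : ((σ b):ℤ)^2 - 4*(6*(c:ℤ))*(ℓ (σ b)) = D := by linear_combination -hdisc (σ b) hσb
    rcases Nat.lt_or_ge 1 (G b) with hG | hG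
    · rw [hχ0 _ _ _ hdisc2 hG, hχ0 _ _ _ hdisc3 (hGtrans b hb hG)]
    · have hG1 : G b = 1 := by have := hGne0 b; omega
      have hGσ1 : G (σ b) = 1 := by
        rcases Nat.lt_or_ge 1 (G (σ b)) with hX | hX
        · exfalso
          have hY := hGtrans (σ b) hσb hX
          rw [hσσ b hblt] at hY
          omega
        · have := hGne0 (σ b); omega
      rw [chiVal b hb hG1, chiVal (σ b) hσb hGσ1]
      congr 1
      exact jacobiSym.mod_left' (Int.modEq_iff_dvd.mpr (hℓdiff b hb))
  -- conclude by the involution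
  refine Finset.sum_involution (fun b _ => σ b) ?_ ?_ ?_ ?_
  · intro b hb
    rw [Finset.mem_filter, Finset.mem_range] at hb
    obtain ⟨hblt, hmod⟩ := hb
    have hdvd : (24*(c:ℤ)) ∣ ((b:ℤ)^2 - D) := Int.dvd_of_emod_eq_zero hmod
    have h1 : kron12 ((σ b:ℕ):ℤ) = - kron12 (b:ℤ) := kron12_flip (hb12 b hdvd) (hσ12 b)
    have h2 : χ (6*(c:ℤ), (b:ℤ), ℓ b) = χ (6*(c:ℤ), ((σ b):ℤ), ℓ (σ b)) := hχeq b hblt hdvd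
    show kron12 (b:ℤ) * χ (6*(c:ℤ), (b:ℤ), ℓ b)
        + kron12 ((σ b):ℤ) * χ (6*(c:ℤ), ((σ b):ℤ), ℓ (σ b)) = 0
    rw [h1, h2]; ring
  · intro b hb _
    rw [Finset.mem_filter, Finset.mem_range] at hb
    have hdvd : (24*(c:ℤ)) ∣ ((b:ℤ)^2 - D) := Int.dvd_of_emod_eq_zero hb.2
    intro heq
    have heq' : σ b = b := heq
    have h12 := hσ12 b
    rw [heq'] at h12
    rcases hb12 b hdvd with hcase|hcase|hcase|hcase <;> omega
  · intro b hb
    rw [Finset.mem_filter, Finset.mem_range] at hb ⊢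
    have hdvd : (24*(c:ℤ)) ∣ ((b:ℤ)^2 - D) := Int.dvd_of_emod_eq_zero hb.2
    exact ⟨hσlt b, Int.emod_eq_zero_of_dvd (hσmemZ b hdvd)⟩
  · intro b hb
    rw [Finset.mem_filter, Finset.mem_range] at hb
    exact hσσ b hb.1
end
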